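/- Let n = 2^{l+1} - 1 with l ≥ 1, let c = 2^l, and let k ≥ n. For any vertices x, y of P_n, the number of walks of length k from x to y in P_n that never visit the vertex c is even. -/

import Mathlib

/-- The path graph on `n` vertices. -/
def pathGraph (n : ℕ) : SimpleGraph (Fin n) where
  Adj i j := (i : ℕ) + 1 = j ∨ (j : ℕ) + 1 = i
  symm := ⟨fun i j h => h.symm⟩
  loopless := ⟨by intro i h; rcases h with h | h <;> omega⟩

instance (n : ℕ) : DecidableRel (pathGraph n).Adj :=
  fun i j => inferInstanceAs (Decidable (((i : ℕ) + 1 = j) ∨ ((j : ℕ) + 1 = i)))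

namespace AvoidMiddle

open Matrix

/-- The path graph with all edges at `c` removed. -/
def G' (n : ℕ) (c : Fin n) : SimpleGraph (Fin n) where
  Adj i j := ((i : ℕ) + 1 = j ∨ (j : ℕ) + 1 = i) ∧ i ≠ c ∧ j ≠ c
  symm := ⟨by rintro i j ⟨h, hi, hj⟩; exact ⟨h.symm, hj, hi⟩⟩
  loopless := ⟨by rintro i ⟨h, -, -⟩; rcases h with h | h <;> omega⟩

instance (n : ℕ) (c : Fin n) : DecidableRel (G' n c).Adj := fun i j =>
  inferInstanceAs (Decidable (_ ∧ _ ∧ _))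

lemma G'_le (n : ℕ) (c : Fin n) : G' n c ≤ pathGraph n := by
  intro a b h; exact h.1

lemma no_c_support {n : ℕ} {c : Fin n} {y : Fin n} :
    ∀ {x : Fin n} (q : (G' n c).Walk x y), x ≠ c → c ∉ q.support
  | x, SimpleGraph.Walk.nil, hx => by
    simp only [SimpleGraph.Walk.support_nil, List.mem_singleton]
    exact fun h => hx h.symm
  | x, SimpleGraph.Walk.cons h q, hx => by
    have hz := h.2.2
    simp only [SimpleGraph.Walk.support_cons, List.mem_cons]
    rintro (rfl | hc)
    · exact hx rfl
    · exact no_c_support q hz hc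

lemma edges_G' {n : ℕ} {c x y : Fin n} (p : (pathGraph n).Walk x y) (hc : c ∉ p.support) :
    ∀ e ∈ p.edges, e ∈ (G' n c).edgeSet := by
  intro e
  induction e using Sym2.ind with
  | _ a b =>
    intro he
    have hadj : (pathGraph n).Adj a b := p.adj_of_mem_edges he
    have ha : a ∈ p.support := p.fst_mem_support_of_mem_edges he
    have hb : b ∈ p.support := p.snd_mem_support_of_mem_edges he
    exact (SimpleGraph.mem_edgeSet (G' n c)).mpr
      ⟨hadj, fun h => hc (h ▸ ha), fun h => hc (h ▸ hb)⟩

lemma card_avoid {n : ℕ} {c x y : Fin n} (hx : x ≠ c) (k : ℕ) :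
    (((pathGraph n).finsetWalkLength k x y).filter (fun p => c ∉ p.support)).card
      = ((G' n c).finsetWalkLength k x y).card := by
  classical
  refine Finset.card_bij'
    (fun p hp => p.transfer (G' n c)
      (edges_G' p (by simpa using (Finset.mem_filter.mp hp).2)))
    (fun q hq => q.transfer (pathGraph n)
      (fun e he => SimpleGraph.edgeSet_mono (G'_le n c) (q.edges_subset_edgeSet he)))
    ?_ ?_ ?_ ?_
  · intro p hp
    rw [SimpleGraph.mem_finsetWalkLength_iff, SimpleGraph.Walk.length_transfer]
    exact SimpleGraph.mem_finsetWalkLength_iff.mp (Finset.mem_filter.mp hp).1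
  · intro q hq
    rw [Finset.mem_filter]
    constructor
    · rw [SimpleGraph.mem_finsetWalkLength_iff, SimpleGraph.Walk.length_transfer]
      exact SimpleGraph.mem_finsetWalkLength_iff.mp hq
    · rw [SimpleGraph.Walk.support_transfer]
      exact no_c_support q hx
  · intro p hp
    exact (SimpleGraph.Walk.transfer_transfer p _ _).trans (SimpleGraph.Walk.transfer_self p)
  · intro q hq
    exact (SimpleGraph.Walk.transfer_transfer q _ _).trans (SimpleGraph.Walk.transfer_self q)

/-! ### The group algebra -/

abbrev W (n : ℕ) : Type := AddMonoidAlgebra (ZMod 2) (ZMod (n + 1))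

noncomputable def gg (n : ℕ) (t : ZMod (n + 1)) : W n :=
  AddMonoidAlgebra.single t 1 + AddMonoidAlgebra.single (-t) 1

lemma addself {n : ℕ} (x : W n) : x + x = 0 := by
  have h : ((1 : ZMod 2) + 1) • x = x + x := by rw [add_smul, one_smul]
  rw [← h, show ((1 : ZMod 2) + 1) = 0 by decide, zero_smul]

lemma gg_neg {n : ℕ} (t : ZMod (n + 1)) : gg n (-t) = gg n t := by
  unfold gg; rw [neg_neg]; exact add_comm _ _

lemma gg_self {n : ℕ} {t : ZMod (n + 1)} (h : -t = t) : gg n t = 0 := by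
  unfold gg
  rw [h]; exact addself _

lemma gg_mulB {n : ℕ} (t : ZMod (n + 1)) :
    gg n 1 * gg n t = gg n (t + 1) + gg n (t - 1) := by
  unfold gg
  rw [add_mul, mul_add, mul_add, AddMonoidAlgebra.single_mul_single,
    AddMonoidAlgebra.single_mul_single, AddMonoidAlgebra.single_mul_single,
    AddMonoidAlgebra.single_mul_single, one_mul]
  rw [show (1 : ZMod (n+1)) + t = t + 1 by ring,
    show (1 : ZMod (n+1)) + -t = -(t - 1) by ring,
    show (-1 : ZMod (n+1)) + t = t - 1 by ring,
    show (-1 : ZMod (n+1)) + -t = -(t + 1) by ring]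
  abel

lemma gg_sq {n : ℕ} (t : ZMod (n + 1)) : gg n t * gg n t = gg n (t + t) := by
  unfold gg
  rw [add_mul, mul_add, mul_add, AddMonoidAlgebra.single_mul_single,
    AddMonoidAlgebra.single_mul_single, AddMonoidAlgebra.single_mul_single,
    AddMonoidAlgebra.single_mul_single, one_mul]
  rw [show -t + t = (0 : ZMod (n+1)) by ring, show t + -t = (0 : ZMod (n+1)) by ring,
    show -t + -t = -(t + t) by ring]
  have h0 : (AddMonoidAlgebra.single (0 : ZMod (n+1)) (1 : ZMod 2)) +
      (AddMonoidAlgebra.single (0 : ZMod (n+1)) (1 : ZMod 2)) = 0 := addself _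
  linear_combination h0

noncomputable def uu (n : ℕ) (m : ℕ) : W n := gg n ((m : ℕ) : ZMod (n + 1))

lemma Bpow {n : ℕ} (j : ℕ) : gg n 1 ^ (2 ^ j) = gg n ((2 ^ j : ℕ) : ZMod (n + 1)) := by
  induction j with
  | zero => simp
  | succ j ih =>
    have : (2 : ℕ) ^ (j + 1) = 2 ^ j * 2 := by ring
    rw [this, pow_mul, ih, sq, gg_sq]
    congr 1
    push_cast
    ring

lemma Bpow_zero {l n : ℕ} (hn1 : n + 1 = 2 ^ (l + 1)) (k : ℕ) (hk : 2 ^ l ≤ k) :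
    gg n 1 ^ k = 0 := by
  have h1 : gg n 1 ^ (2 ^ l) = 0 := by
    rw [Bpow]
    apply gg_self
    have : ((2 ^ l : ℕ) : ZMod (n + 1)) + ((2 ^ l : ℕ) : ZMod (n + 1)) = 0 := by
      rw [← Nat.cast_add, show 2 ^ l + 2 ^ l = n + 1 by omega, ZMod.natCast_self]
    linear_combination -this
  calc gg n 1 ^ k = gg n 1 ^ (2 ^ l) * gg n 1 ^ (k - 2 ^ l) := by
        rw [← pow_add]; congr 1; omega
    _ = 0 := by rw [h1, zero_mul]

lemma uu_mulB {n : ℕ} (m : ℕ) : gg n 1 * uu n (m + 1) = uu n (m + 2) + uu n m := by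
  unfold uu
  rw [gg_mulB]
  congr 1 <;> push_cast <;> ring

lemma uu_zero {n : ℕ} : uu n 0 = 0 := by
  unfold uu
  apply gg_self; simp

lemma uu_n1 {n : ℕ} : uu n (n + 1) = 0 := by
  unfold uu
  rw [show (((n+1 : ℕ)) : ZMod (n+1)) = 0 by rw [ZMod.natCast_self]]
  apply gg_self; simp

lemma uu_half {n m : ℕ} (h : 2 * m = n + 1) : uu n m = 0 := by
  unfold uu
  apply gg_self
  have : ((m : ℕ) : ZMod (n + 1)) + ((m : ℕ) : ZMod (n + 1)) = 0 := by
    rw [← Nat.cast_add, show m + m = n + 1 by omega, ZMod.natCast_self]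
  linear_combination -this

lemma uu_refl {n a b : ℕ} (h : a + b = n + 1) : uu n a = uu n b := by
  unfold uu
  have : ((a : ℕ) : ZMod (n + 1)) = -((b : ℕ) : ZMod (n + 1)) := by
    have : ((a : ℕ) : ZMod (n + 1)) + ((b : ℕ) : ZMod (n + 1)) = 0 := by
      rw [← Nat.cast_add, h, ZMod.natCast_self]
    linear_combination this
  rw [this, gg_neg]



/-! ### Equivariance -/

lemma E1 {n : ℕ} {c : Fin n} (hcn : n = 2 * (c : ℕ) + 1) (i : Fin n) :
    gg n 1 * uu n ((i : ℕ) + 1) =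
      ∑ i' : Fin n, ((G' n c).adjMatrix (ZMod 2) i i') • uu n ((i' : ℕ) + 1) := by
  by_cases hic : i = c
  · subst hic
    rw [show uu n ((i : ℕ) + 1) = 0 from uu_half (by omega), mul_zero]
    symm
    apply Finset.sum_eq_zero
    intro i' _
    rw [SimpleGraph.adjMatrix_apply, if_neg, zero_smul]
    rintro ⟨-, h, -⟩; exact h rfl
  · have hsplit : ∀ i' : Fin n,
        ((G' n c).adjMatrix (ZMod 2) i i') • uu n ((i' : ℕ) + 1)
          = (if ((i : ℕ) + 1 = (i' : ℕ) ∧ i ≠ c ∧ i' ≠ c) then uu n ((i' : ℕ) + 1) else 0)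
            + (if ((i' : ℕ) + 1 = (i : ℕ) ∧ i ≠ c ∧ i' ≠ c) then uu n ((i' : ℕ) + 1) else 0) := by
      intro i'
      rw [SimpleGraph.adjMatrix_apply]
      by_cases h1 : ((i : ℕ) + 1 = (i' : ℕ) ∧ i ≠ c ∧ i' ≠ c)
      · have hAdj : (G' n c).Adj i i' := ⟨Or.inl h1.1, h1.2⟩
        rw [if_pos hAdj, if_pos h1, one_smul,
          if_neg (fun h => by have a1 := h1.1; have a2 := h.1; omega), add_zero]
      · by_cases h2 : ((i' : ℕ) + 1 = (i : ℕ) ∧ i ≠ c ∧ i' ≠ c)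
        · have hAdj : (G' n c).Adj i i' := ⟨Or.inr h2.1, h2.2⟩
          rw [if_pos hAdj, if_pos h2, one_smul,
            if_neg h1, zero_add]
        · rw [if_neg, if_neg h1, if_neg h2, zero_smul, add_zero]
          rintro ⟨h | h, hi, hj⟩
          · exact h1 ⟨h, hi, hj⟩
          · exact h2 ⟨h, hi, hj⟩
    rw [Finset.sum_congr rfl (fun i' _ => hsplit i'), Finset.sum_add_distrib, uu_mulB]
    have hS1 : ∑ i' : Fin n,
        (if ((i : ℕ) + 1 = (i' : ℕ) ∧ i ≠ c ∧ i' ≠ c) then uu n ((i' : ℕ) + 1) else 0)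
          = uu n ((i : ℕ) + 2) := by
      by_cases hr : ((i : ℕ) + 1 < n ∧ (i : ℕ) + 1 ≠ (c : ℕ))
      · rw [Finset.sum_eq_single_of_mem (⟨(i : ℕ) + 1, hr.1⟩ : Fin n) (Finset.mem_univ _)]
        · rw [if_pos ⟨rfl, hic, fun h => hr.2 (by rw [← h])⟩]
        · intro b _ hb
          rw [if_neg]
          rintro ⟨h1, -, -⟩
          exact hb (Fin.ext h1.symm)
      · rw [Finset.sum_eq_zero]
        · have hin := i.isLt
          have : (i : ℕ) + 1 = n ∨ (i : ℕ) + 1 = (c : ℕ) := by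
            rcases Decidable.not_and_iff_or_not.mp hr with h | h <;> omega
          rcases this with h | h
          · rw [show (i : ℕ) + 2 = n + 1 by omega, uu_n1]
          · rw [show (i : ℕ) + 2 = (c : ℕ) + 1 by omega, uu_half (by omega)]
        · intro b _
          rw [if_neg]
          rintro ⟨h1, -, hbc⟩
          have hbn := b.isLt
          have : (b : ℕ) ≠ (c : ℕ) := fun h => hbc (Fin.ext h)
          exact hr (by omega)
    have hS2 : ∑ i' : Fin n,
        (if ((i' : ℕ) + 1 = (i : ℕ) ∧ i ≠ c ∧ i' ≠ c) then uu n ((i' : ℕ) + 1) else 0)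
          = uu n (i : ℕ) := by
      by_cases hr : (1 ≤ (i : ℕ) ∧ (i : ℕ) - 1 ≠ (c : ℕ))
      · have hin := i.isLt
        rw [Finset.sum_eq_single_of_mem (⟨(i : ℕ) - 1, by omega⟩ : Fin n) (Finset.mem_univ _)]
        · rw [if_pos ⟨by simp only [Fin.val_mk]; omega, hic, fun h => hr.2 (by rw [← h])⟩]
          congr 1
          simp only [Fin.val_mk]
          omega
        · intro b _ hb
          rw [if_neg]
          rintro ⟨h1, -, -⟩
          exact hb (Fin.ext (by simp only [Fin.val_mk]; omega))
      · rw [Finset.sum_eq_zero]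
        · have : (i : ℕ) = 0 ∨ (i : ℕ) = (c : ℕ) + 1 := by
            rcases Decidable.not_and_iff_or_not.mp hr with h | h <;> omega
          rcases this with h | h
          · rw [h, uu_zero]
          · rw [h, uu_half (by omega)]
        · intro b _
          rw [if_neg]
          rintro ⟨h1, -, hbc⟩
          have : (b : ℕ) ≠ (c : ℕ) := fun h => hbc (Fin.ext h)
          exact hr (by omega)
    rw [hS1, hS2]

lemma E2 {n : ℕ} {c : Fin n} (hcn : n = 2 * (c : ℕ) + 1) (k : ℕ) (i : Fin n) :
    gg n 1 ^ k * uu n ((i : ℕ) + 1)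
      = ∑ i' : Fin n, (((G' n c).adjMatrix (ZMod 2) ^ k) i i') • uu n ((i' : ℕ) + 1) := by
  induction k generalizing i with
  | zero =>
    rw [pow_zero, pow_zero, one_mul]
    rw [Finset.sum_eq_single_of_mem i (Finset.mem_univ i)]
    · rw [Matrix.one_apply_eq, one_smul]
    · intro b _ hb
      rw [Matrix.one_apply_ne (Ne.symm hb), zero_smul]
  | succ k ih =>
    set A := (G' n c).adjMatrix (ZMod 2) with hA
    calc gg n 1 ^ (k + 1) * uu n ((i : ℕ) + 1)
        = gg n 1 * (gg n 1 ^ k * uu n ((i : ℕ) + 1)) := by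
          rw [pow_succ', mul_assoc]
      _ = gg n 1 * ∑ i' : Fin n, ((A ^ k) i i') • uu n ((i' : ℕ) + 1) := by rw [ih i]
      _ = ∑ i' : Fin n, ((A ^ k) i i') • (gg n 1 * uu n ((i' : ℕ) + 1)) := by
          rw [Finset.mul_sum]; simp_rw [mul_smul_comm]
      _ = ∑ i' : Fin n, ((A ^ k) i i') •
            ∑ i'' : Fin n, (A i' i'') • uu n ((i'' : ℕ) + 1) := by
          exact Finset.sum_congr rfl fun i' _ => by rw [E1 hcn i']
      _ = ∑ i' : Fin n, ∑ i'' : Fin n,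
            ((A ^ k) i i' * A i' i'') • uu n ((i'' : ℕ) + 1) := by
          simp_rw [Finset.smul_sum, smul_smul]
      _ = ∑ i'' : Fin n, ∑ i' : Fin n,
            ((A ^ k) i i' * A i' i'') • uu n ((i'' : ℕ) + 1) := Finset.sum_comm
      _ = ∑ i'' : Fin n, ((A ^ (k + 1)) i i'') • uu n ((i'' : ℕ) + 1) := by
          simp_rw [← Finset.sum_smul, ← Matrix.mul_apply, ← pow_succ]

/-! ### Extraction -/

lemma extract {n : ℕ} (hn : 1 ≤ n) (a : Fin n → ZMod 2)
    (h : ∑ i' : Fin n, a i' • uu n ((i' : ℕ) + 1) = 0) (i₀ : Fin n) :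
    a i₀ = a ⟨n - 1 - (i₀ : ℕ), by omega⟩ := by
  set j₀ : Fin n := ⟨n - 1 - (i₀ : ℕ), by omega⟩ with hj₀
  set t₀ : ZMod (n + 1) := (((i₀ : ℕ) + 1 : ℕ) : ZMod (n + 1)) with ht₀
  simp only [uu, gg] at h
  have h' : (∑ i' : Fin n, a i' •
      (Finsupp.single ((((i' : ℕ) + 1 : ℕ)) : ZMod (n + 1)) (1 : ZMod 2)
        + Finsupp.single (-((((i' : ℕ) + 1 : ℕ)) : ZMod (n + 1))) (1 : ZMod 2)))
      = (0 : ZMod (n + 1) →₀ ZMod 2) := by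
    have := congrArg AddMonoidAlgebra.coeff h
    rw [AddMonoidAlgebra.coeff_sum] at this
    exact this
  have h0 := congrArg (fun f : ZMod (n + 1) →₀ ZMod 2 => f t₀) h'
  simp only [Finsupp.finset_sum_apply, Finsupp.coe_zero, Pi.zero_apply,
    Finsupp.smul_apply, Finsupp.add_apply, Finsupp.single_apply, smul_add] at h0
  rw [Finset.sum_add_distrib] at h0
  have hsum1 : ∑ i' : Fin n,
      a i' • ((if ((((i' : ℕ) + 1 : ℕ) : ZMod (n + 1)) = t₀) then (1 : ZMod 2) else 0)) = a i₀ := by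
    rw [Finset.sum_eq_single_of_mem i₀ (Finset.mem_univ i₀)]
    · rw [ht₀, if_pos rfl, smul_eq_mul, mul_one]
    · intro b _ hb
      rw [if_neg, smul_zero]
      intro heq
      rw [ht₀, ZMod.natCast_eq_natCast_iff'] at heq
      have hbn := b.isLt
      have hin := i₀.isLt
      rw [Nat.mod_eq_of_lt (by omega), Nat.mod_eq_of_lt (by omega)] at heq
      exact hb (Fin.ext (by omega))
  have hsum2 : ∑ i' : Fin n,
      a i' • ((if (-((((i' : ℕ) + 1 : ℕ) : ZMod (n + 1))) = t₀) then (1 : ZMod 2) else 0))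
        = a j₀ := by
    rw [Finset.sum_eq_single_of_mem j₀ (Finset.mem_univ j₀)]
    · have hval : ((j₀ : ℕ) + 1) + ((i₀ : ℕ) + 1) = n + 1 := by
        have := i₀.isLt
        simp only [hj₀]
        omega
      have hcast : ((((j₀ : ℕ) + 1 : ℕ)) : ZMod (n + 1)) + ((((i₀ : ℕ) + 1 : ℕ)) : ZMod (n + 1))
          = 0 := by
        rw [← Nat.cast_add, hval, ZMod.natCast_self]
      rw [ht₀, if_pos (by linear_combination -hcast), smul_eq_mul, mul_one]
    · intro b _ hb
      rw [if_neg, smul_zero]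
      intro heq
      rw [ht₀] at heq
      have hzero : ((((b : ℕ) + 1) + ((i₀ : ℕ) + 1) : ℕ) : ZMod (n + 1)) = 0 := by
        push_cast
        push_cast at heq
        linear_combination -heq
      rw [ZMod.natCast_eq_zero_iff] at hzero
      obtain ⟨q, hq⟩ := hzero
      have hbn := b.isLt
      have hin := i₀.isLt
      have hq2 : q ≠ 0 → q ≠ 1 → 2 * (n + 1) ≤ (n + 1) * q := by
        intro h1 h2
        calc 2 * (n + 1) = (n + 1) * 2 := by ring
          _ ≤ (n + 1) * q := Nat.mul_le_mul_left _ (by omega)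
      have hq1 : q = 1 := by
        by_cases hq0 : q = 0
        · rw [hq0, mul_zero] at hq; omega
        · by_cases hq1 : q = 1
          · exact hq1
          · have := hq2 hq0 hq1
            omega
      rw [hq1, mul_one] at hq
      exact hb (Fin.ext (by simp only [hj₀]; omega))
  rw [hsum1, hsum2] at h0
  have hz : ∀ p q : ZMod 2, p + q = 0 → p = q := by decide
  exact hz _ _ h0

/-! ### Component and symmetry -/

lemma comp {n : ℕ} {c : Fin n} (k : ℕ) :
    ∀ x y : Fin n, (x : ℕ) < (c : ℕ) → (c : ℕ) < (y : ℕ) →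
      ((G' n c).adjMatrix (ZMod 2) ^ k) x y = 0 := by
  induction k with
  | zero =>
    intro x y hx hy
    exact Matrix.one_apply_ne (by intro h; rw [h] at hx; omega)
  | succ k ih =>
    intro x y hx hy
    rw [pow_succ', Matrix.mul_apply]
    apply Finset.sum_eq_zero
    intro z _
    by_cases hz : (G' n c).Adj x z
    · have hzc : (z : ℕ) < (c : ℕ) := by
        obtain ⟨h1, -, h3⟩ := hz
        have : (z : ℕ) ≠ (c : ℕ) := fun h => h3 (Fin.ext h)
        rcases h1 with h1 | h1 <;> omega
      rw [ih z y hzc hy, mul_zero]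
    · rw [SimpleGraph.adjMatrix_apply, if_neg hz, zero_mul]

lemma symm_pow {n : ℕ} {c : Fin n} (k : ℕ) (x y : Fin n) :
    ((G' n c).adjMatrix (ZMod 2) ^ k) x y = ((G' n c).adjMatrix (ZMod 2) ^ k) y x := by
  calc ((G' n c).adjMatrix (ZMod 2) ^ k) x y
      = (((G' n c).adjMatrix (ZMod 2) ^ k)ᵀ) y x := (Matrix.transpose_apply _ _ _).symm
    _ = ((((G' n c).adjMatrix (ZMod 2))ᵀ) ^ k) y x := by rw [Matrix.transpose_pow]
    _ = ((G' n c).adjMatrix (ZMod 2) ^ k) y x := by rw [SimpleGraph.transpose_adjMatrix]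

/-! ### Nilpotency -/

lemma Apow_entry_zero {l n : ℕ} (hl : 1 ≤ l) (hn1 : n + 1 = 2 ^ (l + 1)) {c : Fin n}
    (hc : (c : ℕ) + 1 = 2 ^ l) (k : ℕ) (hk : 2 ^ l ≤ k) (x y : Fin n) :
    ((G' n c).adjMatrix (ZMod 2) ^ k) x y = 0 := by
  have h2 : 2 ≤ 2 ^ l := by
    calc 2 = 2 ^ 1 := by norm_num
      _ ≤ 2 ^ l := Nat.pow_le_pow_right (by norm_num) hl
  have h2l1 : (2 : ℕ) ^ (l + 1) = 2 * 2 ^ l := by ring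
  have hcn : n = 2 * (c : ℕ) + 1 := by omega
  have hAc : ∀ z : Fin n, (G' n c).adjMatrix (ZMod 2) z c = 0 := fun z => by
    rw [SimpleGraph.adjMatrix_apply, if_neg]; rintro ⟨-, -, h⟩; exact h rfl
  have hAr : ∀ z : Fin n, (G' n c).adjMatrix (ZMod 2) c z = 0 := fun z => by
    rw [SimpleGraph.adjMatrix_apply, if_neg]; rintro ⟨-, h, -⟩; exact h rfl
  by_cases hyc : y = c
  · subst hyc
    obtain ⟨k', rfl⟩ : ∃ k', k = k' + 1 := ⟨k - 1, by omega⟩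
    rw [pow_succ, Matrix.mul_apply]
    exact Finset.sum_eq_zero fun z _ => by rw [hAc z, mul_zero]
  by_cases hxc : x = c
  · subst hxc
    obtain ⟨k', rfl⟩ : ∃ k', k = k' + 1 := ⟨k - 1, by omega⟩
    rw [pow_succ', Matrix.mul_apply]
    exact Finset.sum_eq_zero fun z _ => by rw [hAr z, zero_mul]
  have hsum : ∑ i' : Fin n,
      (((G' n c).adjMatrix (ZMod 2) ^ k) x i') • uu n ((i' : ℕ) + 1) = 0 := by
    rw [← E2 hcn k x, Bpow_zero hn1 k hk, zero_mul]
  have hext := extract (by omega) (fun i' => ((G' n c).adjMatrix (ZMod 2) ^ k) x i') hsum y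
  have hxcv : (x : ℕ) ≠ (c : ℕ) := fun h => hxc (Fin.ext h)
  have hycv : (y : ℕ) ≠ (c : ℕ) := fun h => hyc (Fin.ext h)
  have hxn := x.isLt
  have hyn := y.isLt
  rcases Nat.lt_or_ge (x : ℕ) (c : ℕ) with hx | hx
  · rcases Nat.lt_or_ge (y : ℕ) (c : ℕ) with hy | hy
    · rw [hext]
      exact comp k x _ hx (by simp only [Fin.val_mk]; omega)
    · exact comp k x y hx (by omega)
  · rcases Nat.lt_or_ge (y : ℕ) (c : ℕ) with hy | hy
    · rw [symm_pow]
      exact comp k y x hy (by omega)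
    · rw [hext, symm_pow]
      exact comp k _ x (by simp only [Fin.val_mk]; omega) (by omega)

/-! ### From matrices back to walk counts -/

lemma even_of_matrix {n : ℕ} {c : Fin n} (x y : Fin n) (k : ℕ)
    (h : (((G' n c).adjMatrix (ZMod 2)) ^ k) x y = 0) :
    Even ((G' n c).finsetWalkLength k x y).card := by
  classical
  have h1 : ((G' n c).adjMatrix ℕ ^ k) x y = ((G' n c).finsetWalkLength k x y).card := by
    rw [SimpleGraph.adjMatrix_pow_apply_eq_card_walk, SimpleGraph.card_set_walk_length_eq]
    simp
  have h2 : (((G' n c).adjMatrix ℕ).map (Nat.cast : ℕ → ZMod 2)) =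
      (G' n c).adjMatrix (ZMod 2) := by
    ext i j
    simp [SimpleGraph.adjMatrix_apply, Matrix.map_apply, apply_ite (Nat.cast : ℕ → ZMod 2)]
  have h3 : ((((G' n c).adjMatrix ℕ ^ k) x y : ℕ) : ZMod 2) = 0 := by
    have := congrArg (fun M : Matrix (Fin n) (Fin n) (ZMod 2) => M x y)
      (map_pow ((Nat.castRingHom (ZMod 2)).mapMatrix) ((G' n c).adjMatrix ℕ) k)
    simp only [RingHom.mapMatrix_apply] at this
    rw [Matrix.map_apply] at this
    rw [show ((Nat.castRingHom (ZMod 2)) : ℕ → ZMod 2) = (Nat.cast : ℕ → ZMod 2) from rfl] at this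
    rw [this, h2, h]
  rw [h1] at h3
  rw [ZMod.natCast_eq_zero_iff] at h3
  exact (even_iff_two_dvd).mpr h3

end AvoidMiddle

/-- Let `n = 2^(l+1) - 1` with `l ≥ 1`, let `c` be the middle vertex `2^l` (of index
`2^l - 1` in `Fin n`), and let `k ≥ n`. The number of walks of length `k` between any two
vertices of `P_n` that never visit `c` is even. -/
theorem even_card_walks_avoiding_middle (l : ℕ) (hl : 1 ≤ l) (n : ℕ)
    (hn : n = 2 ^ (l + 1) - 1) (c : Fin n) (hc : (c : ℕ) + 1 = 2 ^ l)
    (k : ℕ) (hk : n ≤ k) (x y : Fin n) :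
    Even (((pathGraph n).finsetWalkLength k x y).filter
      (fun p => c ∉ p.support)).card := by
  classical
  have h2 : 2 ≤ 2 ^ l := by
    calc 2 = 2 ^ 1 := by norm_num
      _ ≤ 2 ^ l := Nat.pow_le_pow_right (by norm_num) hl
  have h2l1 : (2 : ℕ) ^ (l + 1) = 2 * 2 ^ l := by ring
  have hn1 : n + 1 = 2 ^ (l + 1) := by omega
  by_cases hx : x = c
  · subst hx
    rw [Finset.filter_eq_empty_iff.mpr (fun p _ => not_not_intro p.start_mem_support),
      Finset.card_empty]
    exact Even.zero
  · rw [AvoidMiddle.card_avoid hx k]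
    exact AvoidMiddle.even_of_matrix x y k
      (AvoidMiddle.Apow_entry_zero hl hn1 hc k (by omega) x y)
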